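/- Let θ ∈ ℝ^p with entries ordered by magnitude |θ|_(1) ≥ ... ≥ |θ|_(p), and suppose |θ|_(1) > 0. Then the function c ↦ ‖[|θ|-c]_+‖₁ / ‖[|θ|-c]_+‖₂ (where [x]_+ denotes entrywise positive part of the vector with entries |θ_j| - c) is continuous and non-increasing on the interval 0 ≤ c < |θ|_(1). -/
import Mathlib

open Finset Real

private lemma st_key {t x y : ℝ} (ht : 0 ≤ t) (hy : 0 ≤ y) (hxy : y ≤ x) :
    max (y - t) 0 * x ≤ max (x - t) 0 * y := by
  rcases le_or_gt y t with h | h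
  · rw [max_eq_right (by linarith)]
    have : (0:ℝ) ≤ max (x - t) 0 := le_max_right _ _
    nlinarith
  · rw [max_eq_left (by linarith), max_eq_left (by linarith)]
    nlinarith

private lemma st_prod {p : ℕ} (a : Fin p → ℝ) (t : ℝ) (ht : 0 ≤ t)
    (ha : ∀ i, 0 ≤ a i) :
    (∑ i, max (a i - t) 0) ^ 2 * (∑ i, (a i) ^ 2) ≤
      (∑ i, a i) ^ 2 * (∑ i, (max (a i - t) 0) ^ 2) := by
  set b : Fin p → ℝ := fun i => max (a i - t) 0 with hbdef
  have hb : ∀ i, 0 ≤ b i := fun i => le_max_right _ _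
  have hbmono : ∀ i j, a j ≤ a i → b j ≤ b i := fun i j h =>
    max_le_max (by linarith) le_rfl
  have hkey : ∀ i j, a j ≤ a i → b j * a i ≤ b i * a j := fun i j h =>
    st_key ht (ha j) h
  -- pairwise nonnegativity facts
  have hp1 : ∀ i j, 0 ≤ (a i - a j) * (b i * a j - b j * a i) := by
    intro i j
    rcases le_total (a j) (a i) with h | h
    · exact mul_nonneg (by linarith) (by linarith [hkey i j h])
    · nlinarith [hkey j i h]
  have hp2 : ∀ i j, 0 ≤ (b i - b j) * (b i * a j - b j * a i) := by
    intro i j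
    rcases le_total (a j) (a i) with h | h
    · exact mul_nonneg (by linarith [hbmono i j h]) (by linarith [hkey i j h])
    · nlinarith [hkey j i h, hbmono j i h]
  -- quad1 : (∑ b) * (∑ a²) ≤ (∑ a*b) * (∑ a)
  have quad1 : (∑ i, b i) * (∑ i, (a i)^2) ≤ (∑ i, a i * b i) * (∑ i, a i) := by
    have h0 : (0:ℝ) ≤ ∑ i, ∑ j, (a i - a j) * (b i * a j - b j * a i) :=
      Finset.sum_nonneg fun i _ => Finset.sum_nonneg fun j _ => hp1 i j
    have hexp : ∑ i, ∑ j, (a i - a j) * (b i * a j - b j * a i)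
        = 2 * ((∑ i, a i * b i) * (∑ i, a i) - (∑ i, b i) * (∑ i, (a i)^2)) := by
      have e1 : ∀ i j : Fin p, (a i - a j) * (b i * a j - b j * a i)
          = (a i * b i) * a j + (a j * b j) * a i - (b i * (a j)^2 + b j * (a i)^2) := by
        intro i j; ring
      simp only [e1, Finset.sum_add_distrib, Finset.sum_sub_distrib,
        ← Finset.mul_sum, ← Finset.sum_mul]
      ring
    rw [hexp] at h0; linarith
  -- quad2 : (∑ b) * (∑ a*b) ≤ (∑ b²) * (∑ a)
  have quad2 : (∑ i, b i) * (∑ i, a i * b i) ≤ (∑ i, (b i)^2) * (∑ i, a i) := by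
    have h0 : (0:ℝ) ≤ ∑ i, ∑ j, (b i - b j) * (b i * a j - b j * a i) :=
      Finset.sum_nonneg fun i _ => Finset.sum_nonneg fun j _ => hp2 i j
    have hexp : ∑ i, ∑ j, (b i - b j) * (b i * a j - b j * a i)
        = 2 * ((∑ i, (b i)^2) * (∑ i, a i) - (∑ i, b i) * (∑ i, a i * b i)) := by
      have e1 : ∀ i j : Fin p, (b i - b j) * (b i * a j - b j * a i)
          = (b i)^2 * a j + (b j)^2 * a i - (b i * (a j * b j) + b j * (a i * b i)) := by
        intro i j; ring
      simp only [e1, Finset.sum_add_distrib, Finset.sum_sub_distrib,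
        ← Finset.mul_sum, ← Finset.sum_mul]
      ring
    rw [hexp] at h0; linarith
  have hB1 : (0:ℝ) ≤ ∑ i, b i := Finset.sum_nonneg fun i _ => hb i
  have hA1 : (0:ℝ) ≤ ∑ i, a i := Finset.sum_nonneg fun i _ => ha i
  nlinarith [mul_le_mul_of_nonneg_left quad1 hB1, mul_le_mul_of_nonneg_right quad2 hA1]

/-- The soft-thresholding ratio `c ↦ ‖[|θ|-c]₊‖₁ / ‖[|θ|-c]₊‖₂` is continuous and
non-increasing on `[0, |θ|₍₁₎)`, where `|θ|₍₁₎ = max_j |θ_j| > 0`. -/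
theorem soft_threshold_ratio_continuous_antitone {p : ℕ}
    (hne : (Finset.univ : Finset (Fin p)).Nonempty) (θ : Fin p → ℝ)
    (hmax : 0 < Finset.univ.sup' hne (fun j => |θ j|)) :
    ContinuousOn
      (fun c : ℝ =>
        (∑ j, max (|θ j| - c) 0) / Real.sqrt (∑ j, (max (|θ j| - c) 0) ^ 2))
      (Set.Ico 0 (Finset.univ.sup' hne (fun j => |θ j|))) ∧
    AntitoneOn
      (fun c : ℝ =>
        (∑ j, max (|θ j| - c) 0) / Real.sqrt (∑ j, (max (|θ j| - c) 0) ^ 2))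
      (Set.Ico 0 (Finset.univ.sup' hne (fun j => |θ j|))) := by
  set M := Finset.univ.sup' hne (fun j => |θ j|) with hM
  obtain ⟨j0, -, hj0⟩ := Finset.exists_mem_eq_sup' hne fun j => |θ j|
  -- positivity of the denominator sum for c < M
  have hden : ∀ c : ℝ, c < M → 0 < ∑ j, (max (|θ j| - c) 0) ^ 2 := by
    intro c hc
    have h1 : 0 < (max (|θ j0| - c) 0) ^ 2 := by
      have : 0 < |θ j0| - c := by rw [hM, hj0] at hc; linarith
      have : max (|θ j0| - c) 0 = |θ j0| - c := max_eq_left this.le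
      rw [this]; positivity
    have h2 : ∀ j ∈ Finset.univ, (0:ℝ) ≤ (max (|θ j| - c) 0) ^ 2 :=
      fun j _ => sq_nonneg _
    calc (0:ℝ) < (max (|θ j0| - c) 0) ^ 2 := h1
      _ ≤ _ := Finset.single_le_sum h2 (Finset.mem_univ j0)
  constructor
  · -- continuity
    have hN : Continuous fun c : ℝ => ∑ j, max (|θ j| - c) 0 :=
      continuous_finset_sum _ fun j _ =>
        (continuous_const.sub continuous_id).max continuous_const
    have hD : Continuous fun c : ℝ => ∑ j, (max (|θ j| - c) 0) ^ 2 :=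
      continuous_finset_sum _ fun j _ =>
        (((continuous_const.sub continuous_id).max continuous_const).pow 2)
    refine ContinuousOn.div hN.continuousOn
      (Real.continuous_sqrt.comp hD).continuousOn ?_
    intro c hc
    exact (Real.sqrt_pos.2 (hden c hc.2)).ne'
  · -- antitone
    intro c hc d hd hcd
    set a : Fin p → ℝ := fun j => max (|θ j| - c) 0 with hadef
    set b : Fin p → ℝ := fun j => max (|θ j| - d) 0 with hbdef
    have ha : ∀ j, 0 ≤ a j := fun j => le_max_right _ _
    have hbeq : ∀ j, b j = max (a j - (d - c)) 0 := by
      intro j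
      rcases le_or_gt c (|θ j|) with h | h
      · simp only [hadef, hbdef, max_eq_left (by linarith : (0:ℝ) ≤ |θ j| - c)]
        ring_nf
      · have h1 : a j = 0 := max_eq_right (by linarith)
        have h2 : b j = 0 := max_eq_right (by linarith)
        rw [h1, h2, max_eq_right (by linarith)]
    have hprod : (∑ j, b j) ^ 2 * (∑ j, (a j) ^ 2) ≤
        (∑ j, a j) ^ 2 * (∑ j, (b j) ^ 2) := by
      have := st_prod a (d - c) (by linarith) ha
      calc (∑ j, b j) ^ 2 * (∑ j, (a j) ^ 2)
          = (∑ j, max (a j - (d - c)) 0) ^ 2 * (∑ j, (a j) ^ 2) := by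
            simp only [hbeq]
        _ ≤ (∑ j, a j) ^ 2 * (∑ j, (max (a j - (d - c)) 0) ^ 2) := this
        _ = (∑ j, a j) ^ 2 * (∑ j, (b j) ^ 2) := by simp only [hbeq]
    have hA2 : 0 < ∑ j, (a j) ^ 2 := hden c hc.2
    have hB2 : 0 < ∑ j, (b j) ^ 2 := hden d hd.2
    have hA1 : 0 ≤ ∑ j, a j := Finset.sum_nonneg fun j _ => ha j
    have hB1 : 0 ≤ ∑ j, b j := Finset.sum_nonneg fun j _ => le_max_right _ _
    show (∑ j, b j) / Real.sqrt (∑ j, (b j) ^ 2) ≤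
        (∑ j, a j) / Real.sqrt (∑ j, (a j) ^ 2)
    rw [div_le_div_iff₀ (Real.sqrt_pos.2 hB2) (Real.sqrt_pos.2 hA2)]
    have hs := Real.sqrt_le_sqrt hprod
    rwa [Real.sqrt_mul (sq_nonneg _), Real.sqrt_mul (sq_nonneg _),
      Real.sqrt_sq hB1, Real.sqrt_sq hA1] at hs
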